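/- arXiv:1501.01357 — 3 statements merged into one kernel-verified Lean document; each statement's English description precedes it below -/
import Mathlib

section
/- A differential character is determined by its curvature up to a character with zero curvature: if f, g ∈ Ĥ^k(X; ℝ/A) have δ₁(f) = δ₁(g), then f − g = i₁(u) for some u ∈ H^{k-1}(X; ℝ/A). -/
/-- An abstract model of the complex of smooth singular chains and of smooth
differential forms on a smooth manifold `X`, together with integration of forms
over chains, the exterior derivative and Stokes' theorem.  This is exactly the
structure needed to define Cheeger--Simons differential characters. -/
structure ChainFormSetup where
  /-- smooth singular `k`-chains -/
  Chain : ℕ → Type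
  [chainGroup : ∀ k, AddCommGroup (Chain k)]
  /-- smooth differential `k`-forms -/
  Form : ℕ → Type
  [formGroup : ∀ k, AddCommGroup (Form k)]
  /-- the boundary operator on smooth singular chains -/
  boundary : ∀ k, Chain (k + 1) →+ Chain k
  boundary_boundary : ∀ k (c : Chain (k + 2)), boundary k (boundary (k + 1) c) = 0
  /-- integration of a `k`-form over a smooth singular `k`-chain -/
  integ : ∀ k, Form k →+ Chain k →+ ℝ
  /-- the exterior derivative -/
  d : ∀ k, Form k →+ Form (k + 1)
  d_d : ∀ k (ω : Form k), d (k + 1) (d k ω) = 0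
  /-- Stokes' theorem -/
  stokes : ∀ k (ω : Form k) (c : Chain (k + 1)),
    integ (k + 1) (d k ω) c = integ k ω (boundary k c)

attribute [instance] ChainFormSetup.chainGroup ChainFormSetup.formGroup

namespace ChainFormSetup

variable (S : ChainFormSetup)

/-- the group of smooth singular `k`-cycles `Z_k(X)` -/
def Cycle : ∀ k, AddSubgroup (S.Chain k)
  | 0 => ⊤
  | (k + 1) => (S.boundary k).ker

theorem boundary_mem_cycle (k : ℕ) (c : S.Chain (k + 1)) :
    S.boundary k c ∈ S.Cycle k := by
  cases k with
  | zero => exact AddSubgroup.mem_top _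
  | succ k => exact AddMonoidHom.mem_ker.mpr (S.boundary_boundary k c)

/-- the boundary of a `(k+1)`-chain, viewed as a `k`-cycle -/
def boundaryCycle (k : ℕ) : S.Chain (k + 1) →+ S.Cycle k where
  toFun c := ⟨S.boundary k c, S.boundary_mem_cycle k c⟩
  map_zero' := by ext; simp
  map_add' c₁ c₂ := by ext; simp

/-- reduction of a real number modulo the subring `A ⊂ ℝ`, with values in `ℝ/A` -/
def modA (A : Subring ℝ) : ℝ →+ ℝ ⧸ A.toAddSubgroup :=
  QuotientAddGroup.mk' A.toAddSubgroup

/-- A degree `k+1` Cheeger--Simons differential character with coefficients in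
`ℝ/A`: a group homomorphism on smooth singular `k`-cycles together with a
curvature form `curv` such that `f(∂c) = ∫_c curv mod A` for every `(k+1)`-chain
`c`. -/
structure DiffChar (A : Subring ℝ) (k : ℕ) where
  toFun : S.Cycle k →+ ℝ ⧸ A.toAddSubgroup
  curv : S.Form (k + 1)
  curv_spec : ∀ c : S.Chain (k + 1),
    toFun (S.boundaryCycle k c) = modA A (S.integ (k + 1) curv c)

variable {S}

instance (A : Subring ℝ) (k : ℕ) : Zero (S.DiffChar A k) :=
  ⟨{ toFun := 0
     curv := 0
     curv_spec := by simp [modA] }⟩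

instance (A : Subring ℝ) (k : ℕ) : Add (S.DiffChar A k) :=
  ⟨fun f g =>
    { toFun := f.toFun + g.toFun
      curv := f.curv + g.curv
      curv_spec := by simp [f.curv_spec, g.curv_spec] }⟩

instance (A : Subring ℝ) (k : ℕ) : Neg (S.DiffChar A k) :=
  ⟨fun f =>
    { toFun := -f.toFun
      curv := -f.curv
      curv_spec := by simp [f.curv_spec] }⟩

instance (A : Subring ℝ) (k : ℕ) : Sub (S.DiffChar A k) :=
  ⟨fun f g =>
    { toFun := f.toFun - g.toFun
      curv := f.curv - g.curv
      curv_spec := by simp [f.curv_spec, g.curv_spec, sub_eq_add_neg] }⟩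

variable (S)

/-- `Ω^k_A(X)`: the property of being a closed `k`-form all of whose periods lie
in the subring `A`. -/
def IsClosedWithPeriodsIn (A : Subring ℝ) {k : ℕ} (ω : S.Form k) : Prop :=
  S.d k ω = 0 ∧ ∀ z : S.Cycle k, S.integ k ω z ∈ A

/-- `i₂`: the differential character determined by integration of a `k`-form
against `k`-cycles, with curvature `dα`. -/
def i2 (A : Subring ℝ) {k : ℕ} (α : S.Form k) : S.DiffChar A k where
  toFun := (modA A).comp ((S.integ k α).comp (S.Cycle k).subtype)
  curv := S.d k α
  curv_spec c := by simp [modA, boundaryCycle, S.stokes]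

end ChainFormSetup

namespace ChainFormSetup

variable (S : ChainFormSetup)

/-- the subgroup of boundaries inside the group of `k`-cycles -/
def boundarySubgroup (k : ℕ) : AddSubgroup (S.Cycle k) := (S.boundaryCycle k).range

/-- smooth singular homology `H_k(X; ℤ)` -/
def Homology (k : ℕ) := S.Cycle k ⧸ S.boundarySubgroup k

instance (k : ℕ) : AddCommGroup (S.Homology k) :=
  QuotientAddGroup.Quotient.addCommGroup _

/-- the quotient map from cycles onto homology classes -/
def homologyMk (k : ℕ) : S.Cycle k →+ S.Homology k :=
  QuotientAddGroup.mk' _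

end ChainFormSetup


/-- A differential character is determined by its curvature up
to a flat character: if `δ₁(f) = δ₁(g)` then `f − g = i₁(u)` for some
`u ∈ H^k(X; ℝ/A)` (equivalently, by the universal coefficient theorem for the
divisible group `ℝ/A`, a homomorphism on homology). -/
theorem determined_by_curvature_up_to_i1 (S : ChainFormSetup) (A : Subring ℝ)
    (hA : A ≠ ⊤) (k : ℕ) (f g : S.DiffChar A k) (h : f.curv = g.curv) :
    ∃ u : S.Homology k →+ ℝ ⧸ A.toAddSubgroup,
      f.toFun - g.toFun = u.comp (S.homologyMk k) := by
  have hker : S.boundarySubgroup k ≤ (f.toFun - g.toFun).ker := by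
    rintro z ⟨c, rfl⟩
    simp [AddMonoidHom.mem_ker, f.curv_spec, g.curv_spec, h]
  refine ⟨QuotientAddGroup.lift _ (f.toFun - g.toFun) hker, ?_⟩
  ext z
  rfl
end

section
/- If two natural assignments of differential characters to the geometric data (fiber bundle with geometric structure) have the same curvature form for all data, and differential characteristic classes of even degree for complex vector bundles are determined by naturality and curvature, then the two assignments agree. Concretely (abstract form): let F, G assign to each smooth manifold B and each object ξ over B (with pullback) an element of Ĥ^{even}(B; ℝ/ℚ), both natural with respect to pullback and with δ₁(F(ξ)) = δ₁(G(ξ)) for all ξ; if moreover characters with vanishing curvature that are natural and classified by a classifying space with torsion-free cohomology are zero, then F = G. -/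
namespace ChainFormSetup

/-- The pushforward on smooth singular chains and pullback on differential forms
induced by a smooth map `φ : Y → X`, where `S` models the manifold `X` and `T`
models the manifold `Y`; compatible with boundaries, exterior derivatives and
integration (change of variables). -/
structure SetupMap (S T : ChainFormSetup) where
  /-- the pushforward `φ_*` on smooth singular chains -/
  chainMap : ∀ k, T.Chain k →+ S.Chain k
  chainMap_boundary : ∀ k (c : T.Chain (k + 1)),
    chainMap k (T.boundary k c) = S.boundary k (chainMap (k + 1) c)
  /-- the pullback `φ^*` on differential forms -/
  formPull : ∀ k, S.Form k →+ T.Form k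
  formPull_d : ∀ k (ω : S.Form k), T.d k (formPull k ω) = formPull (k + 1) (S.d k ω)
  integ_pull : ∀ k (ω : S.Form k) (c : T.Chain k),
    S.integ k ω (chainMap k c) = T.integ k (formPull k ω) c

variable {S T U : ChainFormSetup}

theorem SetupMap.chainMap_mem_cycle (φ : SetupMap S T) (k : ℕ) (z : T.Cycle k) :
    φ.chainMap k (z : T.Chain k) ∈ S.Cycle k := by
  cases k with
  | zero => exact AddSubgroup.mem_top _
  | succ k =>
      refine AddMonoidHom.mem_ker.mpr ?_
      rw [← φ.chainMap_boundary k z]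
      have hz : T.boundary k (z : T.Chain (k + 1)) = 0 := AddMonoidHom.mem_ker.mp z.2
      rw [hz, map_zero]

/-- the induced pushforward on cycles -/
def SetupMap.cycleMap (φ : SetupMap S T) (k : ℕ) : T.Cycle k →+ S.Cycle k where
  toFun z := ⟨φ.chainMap k z, φ.chainMap_mem_cycle k z⟩
  map_zero' := by ext; simp
  map_add' z₁ z₂ := by ext; simp

/-- pullback of differential characters along a smooth map:
`(φ^*f)(z) = f(φ_* z)`, with curvature `φ^*(curv f)`. -/
def SetupMap.pull (φ : SetupMap S T) {A : Subring ℝ} {k : ℕ}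
    (f : S.DiffChar A k) : T.DiffChar A k where
  toFun := f.toFun.comp (φ.cycleMap k)
  curv := φ.formPull (k + 1) f.curv
  curv_spec c := by
    have h1 : (φ.cycleMap k) (T.boundaryCycle k c) =
        S.boundaryCycle k (φ.chainMap (k + 1) c) := by
      ext
      simp [cycleMap, boundaryCycle, φ.chainMap_boundary]
    rw [AddMonoidHom.comp_apply, h1, f.curv_spec, φ.integ_pull]

/-- the setup map induced by the identity map -/
def SetupMap.id (S : ChainFormSetup) : SetupMap S S where
  chainMap k := AddMonoidHom.id _
  chainMap_boundary k c := rfl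
  formPull k := AddMonoidHom.id _
  formPull_d k ω := rfl
  integ_pull k ω c := rfl

/-- composition of setup maps, corresponding to composition of smooth maps -/
def SetupMap.comp (ψ : SetupMap S T) (φ : SetupMap T U) : SetupMap S U where
  chainMap k := (ψ.chainMap k).comp (φ.chainMap k)
  chainMap_boundary k c := by
    simp [AddMonoidHom.comp_apply, φ.chainMap_boundary, ψ.chainMap_boundary]
  formPull k := (φ.formPull k).comp (ψ.formPull k)
  formPull_d k ω := by
    simp [AddMonoidHom.comp_apply, φ.formPull_d, ψ.formPull_d]
  integ_pull k ω c := by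
    simp [AddMonoidHom.comp_apply, ψ.integ_pull, φ.integ_pull]

end ChainFormSetup

/-- `ℚ` regarded as a (proper) subring of `ℝ`. -/
noncomputable def ratSub : Subring ℝ := (Rat.castHom ℝ).range

/-- An abstract site of geometric families (proper submersions with closed
`spin^c` fibers of even relative dimension equipped with all the geometric data,
together with Hermitian bundles with unitary connections whose fiberwise Dirac
kernels form superbundles).  `Hom ξ η` is the type of smooth maps `f` between
the bases with `ξ = f^*η`; `baseMap` records the induced chain/form maps. -/
structure GeomSite where
  /-- geometric families -/
  Fam : Type
  /-- the base manifold of a family -/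
  Base : Fam → ChainFormSetup
  /-- smooth maps of bases realizing the first family as pullback of the second -/
  Hom : Fam → Fam → Type
  /-- the induced maps on chains and forms of the bases -/
  baseMap : ∀ {ξ η : Fam}, Hom ξ η → ChainFormSetup.SetupMap (Base η) (Base ξ)

/-- Naturality of an assignment of even-degree differential characters
(`Ĥ^{2m+2}(Base ξ; ℝ/A)` corresponds to `DiffChar A (2m+1)`) to geometric
families: compatibility with pullback. -/
def GeomSite.Natural (G : GeomSite) (A : Subring ℝ)
    (F : ∀ ξ : G.Fam, ∀ m : ℕ, (G.Base ξ).DiffChar A (2 * m + 1)) : Prop :=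
  ∀ ⦃ξ η : G.Fam⦄ (φ : G.Hom ξ η) (m : ℕ),
    F ξ m = (G.baseMap φ).pull (F η m)


/-- Abstract uniqueness (Proposition 3.1): two natural
assignments `F`, `G` of even-degree differential characters in
`Ĥ^{even}(B; ℝ/ℚ)` to geometric families with equal curvatures agree, provided
every natural assignment of flat (zero-curvature) characters vanishes (as holds
when the classifying space has torsion-free cohomology). -/
theorem natural_assignment_determined_by_curvature (G : GeomSite)
    (F F' : ∀ ξ : G.Fam, ∀ m : ℕ, (G.Base ξ).DiffChar ratSub (2 * m + 1))
    (hF : G.Natural ratSub F) (hF' : G.Natural ratSub F')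
    (hcurv : ∀ ξ m, (F ξ m).curv = (F' ξ m).curv)
    (hflat : ∀ H : ∀ ξ : G.Fam, ∀ m : ℕ, (G.Base ξ).DiffChar ratSub (2 * m + 1),
      G.Natural ratSub H → (∀ ξ m, (H ξ m).curv = 0) → ∀ ξ m, H ξ m = 0) :
    ∀ ξ m, F ξ m = F' ξ m := by
  have key : ∀ ξ m, F ξ m - F' ξ m = 0 := by
    apply hflat
    · intro ξ η φ m
      show F ξ m - F' ξ m = (G.baseMap φ).pull (F η m - F' η m)
      rw [hF φ m, hF' φ m]
      have : ∀ (f g : (G.Base η).DiffChar ratSub (2 * m + 1)),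
          (G.baseMap φ).pull (f - g)
            = (G.baseMap φ).pull f - (G.baseMap φ).pull g := by
        intro f g
        show ChainFormSetup.DiffChar.mk _ _ _ = ChainFormSetup.DiffChar.mk _ _ _
        have h1 : (f.toFun - g.toFun).comp ((G.baseMap φ).cycleMap (2 * m + 1))
            = f.toFun.comp ((G.baseMap φ).cycleMap (2 * m + 1))
              - g.toFun.comp ((G.baseMap φ).cycleMap (2 * m + 1)) := by
          ext z; simp
        have h2 : (G.baseMap φ).formPull (2 * m + 1 + 1) (f.curv - g.curv)
            = (G.baseMap φ).formPull (2 * m + 1 + 1) f.curv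
              - (G.baseMap φ).formPull (2 * m + 1 + 1) g.curv := map_sub _ _ _
        congr 1
      exact (this (F η m) (F' η m)).symm
    · intro ξ m
      show (F ξ m).curv - (F' ξ m).curv = 0
      rw [hcurv, sub_self]
  intro ξ m
  have h := key ξ m
  revert h
  obtain ⟨t1, c1, s1⟩ := F ξ m
  obtain ⟨t2, c2, s2⟩ := F' ξ m
  intro h
  have ht : t1 - t2 = 0 := congrArg ChainFormSetup.DiffChar.toFun h
  have hc : c1 - c2 = 0 := congrArg ChainFormSetup.DiffChar.curv h
  obtain rfl : t1 = t2 := sub_eq_zero.mp ht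
  obtain rfl : c1 = c2 := sub_eq_zero.mp hc
  rfl
end

section
/- Uniqueness characterization underlying Bismut's theorem (formal version): suppose Φ and Ψ are assignments, to every geometric family (proper spin^c submersion with Hermitian bundle data) ξ over base B, of classes Φ(ξ), Ψ(ξ) ∈ Ĥ^{even}(B; ℝ/ℚ), both natural under pullback along smooth maps f: B̃ → B (i.e., Φ(f*ξ) = f*Φ(ξ) and likewise for Ψ) and with equal curvatures δ₁(Φ(ξ)) = δ₁(Ψ(ξ)) for all ξ. If every natural assignment of flat (curvature zero) even differential characters to such families vanishes, then Φ = Ψ. Applying this to Φ(ξ) = ∫̂_{X/B} Todd̂ ∗ cĥ(E,∇) − cĥ(ker D^E, ∇^{ker D^E}) and Ψ(ξ) = i₂(η̃(ℰ)) yields Bismut's identity cĥ(ker D^E, ∇^{ker D^E}) + i₂(η̃(ℰ)) = ∫̂_{X/B} Todd̂(T^V X, ∇̂^{T^V X}) ∗ cĥ(E, ∇^E). -/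
namespace ChainFormSetup

theorem DiffChar.ext' {S : ChainFormSetup} {A : Subring ℝ} {k : ℕ}
    {f g : S.DiffChar A k} (h1 : f.toFun = g.toFun) (h2 : f.curv = g.curv) :
    f = g := by
  cases f; cases g; simp_all

@[simp] theorem DiffChar.add_toFun {S : ChainFormSetup} {A : Subring ℝ} {k : ℕ}
    (f g : S.DiffChar A k) : (f + g).toFun = f.toFun + g.toFun := rfl

@[simp] theorem DiffChar.add_curv {S : ChainFormSetup} {A : Subring ℝ} {k : ℕ}
    (f g : S.DiffChar A k) : (f + g).curv = f.curv + g.curv := rfl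

@[simp] theorem DiffChar.sub_toFun {S : ChainFormSetup} {A : Subring ℝ} {k : ℕ}
    (f g : S.DiffChar A k) : (f - g).toFun = f.toFun - g.toFun := rfl

@[simp] theorem DiffChar.sub_curv {S : ChainFormSetup} {A : Subring ℝ} {k : ℕ}
    (f g : S.DiffChar A k) : (f - g).curv = f.curv - g.curv := rfl

@[simp] theorem DiffChar.zero_toFun {S : ChainFormSetup} {A : Subring ℝ} {k : ℕ} :
    (0 : S.DiffChar A k).toFun = 0 := rfl

@[simp] theorem DiffChar.zero_curv {S : ChainFormSetup} {A : Subring ℝ} {k : ℕ} :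
    (0 : S.DiffChar A k).curv = 0 := rfl

theorem cycle_boundary_eq_zero {S : ChainFormSetup} {k : ℕ}
    (z : S.Cycle (k + 1)) : S.boundary k (z : S.Chain (k + 1)) = 0 :=
  AddMonoidHom.mem_ker.mp z.2

/-- integration of an exact form over a cycle (of positive degree) vanishes -/
theorem integ_d_cycle {S : ChainFormSetup} {k : ℕ}
    (β : S.Form k) (z : S.Cycle (k + 1)) :
    S.integ (k + 1) (S.d k β) (z : S.Chain (k + 1)) = 0 := by
  rw [S.stokes, cycle_boundary_eq_zero, map_zero]

end ChainFormSetup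

/-- Uniqueness characterization underlying Bismut's theorem:
if `toddCh = ∫̂ Todd̂ ∗ cĥ(E,∇)` and `chKer = cĥ(ker D^E, ∇^{ker D^E})` are
natural assignments of even differential characters, the Bismut--Cheeger eta
forms `eta` are natural up to exact forms and satisfy the local family index
theorem `d η̃ = δ₁(toddCh) − δ₁(chKer)`, and every natural assignment of flat
even characters vanishes, then Bismut's identity holds:
`cĥ(ker D^E, ∇^{ker D^E}) + i₂(η̃(ℰ)) = ∫̂_{X/B} Todd̂ ∗ cĥ(E, ∇^E)`. -/
theorem bismut_index_theorem (G : GeomSite)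
    (toddCh chKer : ∀ ξ : G.Fam, ∀ m : ℕ, (G.Base ξ).DiffChar ratSub (2 * m + 1))
    (eta : ∀ ξ : G.Fam, ∀ m : ℕ, (G.Base ξ).Form (2 * m + 1))
    (hT : G.Natural ratSub toddCh) (hK : G.Natural ratSub chKer)
    (heta : ∀ ⦃ξ η : G.Fam⦄ (φ : G.Hom ξ η) (m : ℕ),
      ∃ β : (G.Base ξ).Form (2 * m),
        (G.baseMap φ).formPull (2 * m + 1) (eta η m) =
          eta ξ m + (G.Base ξ).d (2 * m) β)
    (hLFIT : ∀ ξ m,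
      (G.Base ξ).d (2 * m + 1) (eta ξ m) = (toddCh ξ m).curv - (chKer ξ m).curv)
    (hflat : ∀ H : ∀ ξ : G.Fam, ∀ m : ℕ, (G.Base ξ).DiffChar ratSub (2 * m + 1),
      G.Natural ratSub H → (∀ ξ m, (H ξ m).curv = 0) → ∀ ξ m, H ξ m = 0) :
    ∀ ξ m, chKer ξ m + (G.Base ξ).i2 ratSub (eta ξ m) = toddCh ξ m := by
  set H : ∀ ξ : G.Fam, ∀ m : ℕ, (G.Base ξ).DiffChar ratSub (2 * m + 1) :=
    fun ξ m => chKer ξ m + (G.Base ξ).i2 ratSub (eta ξ m) - toddCh ξ m with hH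
  have hHnat : G.Natural ratSub H := by
    intro ξ η φ m
    obtain ⟨β, hβ⟩ := heta φ m
    refine ChainFormSetup.DiffChar.ext' ?_ ?_
    · -- toFun
      ext z
      have hK' := congrArg (fun f => f.toFun) (hK φ m)
      have hT' := congrArg (fun f => f.toFun) (hT φ m)
      have hKz := congrFun (congrArg DFunLike.coe hK') z
      have hTz := congrFun (congrArg DFunLike.coe hT') z
      simp only [hH, ChainFormSetup.DiffChar.sub_toFun,
        ChainFormSetup.DiffChar.add_toFun, AddMonoidHom.sub_apply,
        AddMonoidHom.add_apply, ChainFormSetup.SetupMap.pull,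
        AddMonoidHom.comp_apply] at *
      rw [hKz, hTz]
      congr 1
      congr 1
      -- i2 parts
      simp only [ChainFormSetup.i2, AddMonoidHom.comp_apply,
        AddSubgroup.coe_subtype, ChainFormSetup.SetupMap.cycleMap,
        AddMonoidHom.coe_mk, ZeroHom.coe_mk]
      rw [(G.baseMap φ).integ_pull, hβ, map_add, AddMonoidHom.add_apply,
        ChainFormSetup.integ_d_cycle β z, add_zero]
    · -- curv
      have hK' := congrArg ChainFormSetup.DiffChar.curv (hK φ m)
      have hT' := congrArg ChainFormSetup.DiffChar.curv (hT φ m)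
      simp only [hH, ChainFormSetup.DiffChar.sub_curv,
        ChainFormSetup.DiffChar.add_curv, ChainFormSetup.SetupMap.pull] at *
      simp only [ChainFormSetup.i2]
      rw [map_sub, map_add, hK', hT', ← (G.baseMap φ).formPull_d, hβ, map_add,
        (G.Base ξ).d_d, add_zero]
  have hHflat : ∀ ξ m, (H ξ m).curv = 0 := by
    intro ξ m
    simp only [hH, ChainFormSetup.DiffChar.sub_curv,
      ChainFormSetup.DiffChar.add_curv]
    show (chKer ξ m).curv + (G.Base ξ).d _ (eta ξ m) - (toddCh ξ m).curv = 0
    rw [hLFIT]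
    abel
  have h0 := hflat H hHnat hHflat
  intro ξ m
  have h := h0 ξ m
  refine ChainFormSetup.DiffChar.ext' ?_ ?_
  · have h1 := congrArg (fun f => f.toFun) h
    simp only [hH, ChainFormSetup.DiffChar.sub_toFun,
      ChainFormSetup.DiffChar.add_toFun, ChainFormSetup.DiffChar.zero_toFun,
      ] at h1
    exact sub_eq_zero.mp h1
  · have h2 := congrArg ChainFormSetup.DiffChar.curv h
    simp only [hH, ChainFormSetup.DiffChar.sub_curv,
      ChainFormSetup.DiffChar.add_curv, ChainFormSetup.DiffChar.zero_curv,
      ] at h2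
    exact sub_eq_zero.mp h2
end
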